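/- Let t ≥ 2 be an integer and let H be a finite hypergraph with VC-dimension d and at least t vertices. Then the VC-dimension of H^t satisfies d − t + 1 ≤ VC(H^t) ≤ γ_t·d, where γ_t = 1/(t·h^{-1}(1/t)). -/

import Mathlib

/-- `A` is shattered by the hyperedge family `E`. -/
def Shatters {V : Type*} [DecidableEq V] (E : Finset (Finset V)) (A : Finset V) : Prop :=
  ∀ B ⊆ A, ∃ e ∈ E, A ∩ e = B

/-- The hypergraph with hyperedge family `E` has VC-dimension exactly `d`. -/
def IsVCDim {V : Type*} [DecidableEq V] (E : Finset (Finset V)) (d : ℕ) : Prop :=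
  (∃ A : Finset V, Shatters E A ∧ A.card = d) ∧
  ∀ A : Finset V, Shatters E A → A.card ≤ d

/-- The hyperedge family of the hypergraph `H^t`: its vertices are the `t`-element
subsets of `V`, and each hyperedge of `H` gives rise to the hyperedge consisting of all
its `t`-element subsets. -/
def HtEdges {V : Type*} [Fintype V] [DecidableEq V] (E : Finset (Finset V)) (t : ℕ) :
    Finset (Finset {s : Finset V // s.card = t}) :=
  E.image (fun e => Finset.univ.filter (fun s : {s : Finset V // s.card = t} => s.1 ⊆ e))

/-- The binary entropy function (all logarithms base 2). -/
noncomputable def binEntropy (x : ℝ) : ℝ :=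
  -x * Real.logb 2 x - (1 - x) * Real.logb 2 (1 - x)

lemma binEntropy_eq_div' (p : ℝ) : binEntropy p = Real.binEntropy p / Real.log 2 := by
  simp [binEntropy, Real.binEntropy, Real.logb, Real.log_inv]
  ring

lemma binEntropy_lt_binEntropy' {a b : ℝ} (ha : 0 ≤ a) (hab : a < b) (hb : b ≤ 1/2) :
    binEntropy a < binEntropy b := by
  rw [binEntropy_eq_div', binEntropy_eq_div']
  have h2 : (0:ℝ) < Real.log 2 := Real.log_pos (by norm_num)
  apply div_lt_div_of_pos_right ?_ h2
  exact Real.binEntropy_strictMonoOn ⟨ha, by linarith⟩ ⟨by linarith, by norm_num; linarith⟩ hab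

lemma sum_choose_le_rpow' (n d : ℕ) (hd : 0 < d) (hdn : d ≤ n)
    (hp2 : (d:ℝ)/n ≤ 1/2) :
    (∑ k ∈ Finset.Iic d, (n.choose k : ℝ)) ≤ 2 ^ ((n:ℝ) * binEntropy ((d:ℝ)/n)) := by
  have hn : 0 < n := lt_of_lt_of_le hd hdn
  have hn' : (0:ℝ) < n := by exact_mod_cast hn
  set p : ℝ := (d:ℝ)/n with hp_def
  have hp0 : 0 < p := div_pos (by exact_mod_cast hd) hn'
  have hp1 : p < 1 := by linarith
  have h1p : 0 < 1 - p := by linarith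
  have hple : p ≤ 1 - p := by linarith
  have key : ∀ k ∈ Finset.Iic d, (n.choose k : ℝ) * (p^d * (1-p)^(n-d)) ≤
      (n.choose k : ℝ) * (p^k * (1-p)^(n-k)) := by
    intro k hk
    rw [Finset.mem_Iic] at hk
    apply mul_le_mul_of_nonneg_left ?_ (by positivity)
    have h1 : p ^ d = p ^ k * p ^ (d - k) := by rw [← pow_add]; congr 1; omega
    have h2 : (1-p) ^ (n - k) = (1-p) ^ (d - k) * (1-p) ^ (n - d) := by
      rw [← pow_add]; congr 1; omega
    rw [h1, h2]
    have h3 : p ^ (d - k) ≤ (1-p) ^ (d - k) := pow_le_pow_left₀ hp0.le hple _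
    nlinarith [pow_nonneg hp0.le k, pow_nonneg hp0.le (d-k), pow_nonneg h1p.le (n-d),
      pow_nonneg h1p.le (d-k), mul_le_mul_of_nonneg_left h3 (pow_nonneg hp0.le k)]
  have hsum : (∑ k ∈ Finset.Iic d, (n.choose k : ℝ) * (p^k * (1-p)^(n-k))) ≤ 1 := by
    have hbin : (∑ k ∈ Finset.range (n+1), p^k * (1-p)^(n-k) * (n.choose k : ℝ)) = 1 := by
      rw [← add_pow]; simp
    calc (∑ k ∈ Finset.Iic d, (n.choose k : ℝ) * (p^k * (1-p)^(n-k)))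
        = ∑ k ∈ Finset.Iic d, p^k * (1-p)^(n-k) * (n.choose k : ℝ) := by
          apply Finset.sum_congr rfl; intros; ring
      _ ≤ ∑ k ∈ Finset.range (n+1), p^k * (1-p)^(n-k) * (n.choose k : ℝ) := by
          apply Finset.sum_le_sum_of_subset_of_nonneg
          · intro k hk
            simp only [Finset.mem_Iic] at hk
            simp only [Finset.mem_range]; omega
          · intros; positivity
      _ = 1 := hbin
  have hsum2 : (∑ k ∈ Finset.Iic d, (n.choose k : ℝ)) * (p^d * (1-p)^(n-d)) ≤ 1 := by
    rw [Finset.sum_mul]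
    exact le_trans (Finset.sum_le_sum key) hsum
  have hpow : (2:ℝ) ^ ((n:ℝ) * binEntropy p) = (p^d * (1-p)^(n-d))⁻¹ := by
    have e1 : (n:ℝ) * binEntropy p = (-(d:ℝ)) * Real.logb 2 p
        + (-((n:ℝ)-(d:ℝ))) * Real.logb 2 (1-p) := by
      have hnp : (n:ℝ) * p = d := by rw [hp_def]; field_simp
      have h2 : (n:ℝ) * (1 - p) = (n:ℝ) - d := by rw [mul_sub, hnp]; ring
      calc (n:ℝ) * binEntropy p
          = -((n:ℝ)*p) * Real.logb 2 p + -((n:ℝ)*(1-p)) * Real.logb 2 (1-p) := by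
            simp only [binEntropy]; ring
        _ = _ := by rw [hnp, h2]
    rw [e1, Real.rpow_add (by norm_num)]
    rw [mul_comm (-(d:ℝ)), mul_comm (-((n:ℝ)-(d:ℝ)))]
    rw [Real.rpow_mul (by norm_num), Real.rpow_mul (by norm_num)]
    rw [Real.rpow_logb (by norm_num) (by norm_num) hp0,
        Real.rpow_logb (by norm_num) (by norm_num) h1p]
    rw [Real.rpow_neg hp0.le, Real.rpow_neg h1p.le]
    rw [show ((n:ℝ) - d) = ((n - d : ℕ) : ℝ) by push_cast [hdn]; ring]
    rw [Real.rpow_natCast, Real.rpow_natCast, mul_inv]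
  rw [hpow, inv_eq_one_div, le_div_iff₀ (by positivity)]
  exact hsum2

lemma vcHt_lower' {V : Type*} [Fintype V] [DecidableEq V] (E : Finset (Finset V))
    (t : ℕ) (ht : 2 ≤ t) (d : ℕ) (A0 : Finset V) (hA0s : Shatters E A0) (hA0c : A0.card = d)
    (hdt : t ≤ d) (d' : ℕ) (hmax' : ∀ A, Shatters (HtEdges E t) A → A.card ≤ d') :
    d - (t - 1) ≤ d' := by
  classical
  obtain ⟨T, hTA, hTc⟩ := Finset.exists_subset_card_eq (show t - 1 ≤ A0.card by omega)
  set R : Finset V := A0 \ T with hR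
  have hRA : R ⊆ A0 := Finset.sdiff_subset
  have hRT : ∀ a ∈ R, a ∉ T := by intro a ha; exact (Finset.mem_sdiff.1 ha).2
  have hRc : R.card = d - (t - 1) := by
    rw [hR, Finset.card_sdiff_of_subset hTA, hTc, hA0c]
  have hcard : ∀ a ∈ R, (insert a T).card = t := by
    intro a ha
    rw [Finset.card_insert_of_notMem (hRT a ha), hTc]; omega
  set 𝒜' : Finset {s : Finset V // s.card = t} :=
    R.attach.image (fun a => ⟨insert a.1 T, hcard a.1 a.2⟩) with h𝒜'
  have hinj : ∀ a b : {x // x ∈ R}, insert a.1 T = insert b.1 T → a = b := by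
    intro a b hab
    have : a.1 ∈ insert b.1 T := hab ▸ Finset.mem_insert_self a.1 T
    rcases Finset.mem_insert.1 this with h | h
    · exact Subtype.ext h
    · exact absurd h (hRT a.1 a.2)
  have h𝒜'c : 𝒜'.card = d - (t - 1) := by
    rw [h𝒜', Finset.card_image_of_injective _ (fun a b hab => hinj a b (congrArg Subtype.val hab)),
      Finset.card_attach, hRc]
  have hshat : Shatters (HtEdges E t) 𝒜' := by
    intro B hB
    set S : Finset V := R.filter (fun a => ∃ s ∈ B, s.1 = insert a T) with hS
    have hTS : T ∪ S ⊆ A0 := Finset.union_subset hTA ((Finset.filter_subset _ _).trans hRA)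
    obtain ⟨e, he, hAe⟩ := hA0s (T ∪ S) hTS
    refine ⟨Finset.univ.filter (fun s : {s : Finset V // s.card = t} => s.1 ⊆ e),
      Finset.mem_image_of_mem _ he, ?_⟩
    ext s
    simp only [Finset.mem_inter, Finset.mem_filter, Finset.mem_univ, true_and]
    constructor
    · rintro ⟨hs𝒜, hse⟩
      rw [h𝒜', Finset.mem_image] at hs𝒜
      obtain ⟨a, _, rfl⟩ := hs𝒜
      have haA : insert a.1 T ⊆ A0 := Finset.insert_subset (hRA a.2) hTA
      have : insert a.1 T ⊆ T ∪ S := by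
        rw [← hAe]; exact Finset.subset_inter haA hse
      have haS : a.1 ∈ S := by
        rcases Finset.mem_union.1 (this (Finset.mem_insert_self a.1 T)) with h | h
        · exact absurd h (hRT a.1 a.2)
        · exact h
      obtain ⟨s', hs'B, hs'⟩ := (Finset.mem_filter.1 haS).2
      have hs'𝒜 : s' ∈ 𝒜' := hB hs'B
      rw [h𝒜', Finset.mem_image] at hs'𝒜
      obtain ⟨b, _, rfl⟩ := hs'𝒜
      have : b = a := hinj b a hs'
      subst this
      exact hs'B
    · intro hsB
      have hs𝒜 : s ∈ 𝒜' := hB hsB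
      refine ⟨hs𝒜, ?_⟩
      rw [h𝒜', Finset.mem_image] at hs𝒜
      obtain ⟨a, haR, hsa⟩ := hs𝒜
      have haS : a.1 ∈ S := by
        rw [hS, Finset.mem_filter]
        exact ⟨a.2, s, hsB, by rw [← hsa]⟩
      have hsub : insert a.1 T ⊆ T ∪ S :=
        Finset.insert_subset (Finset.mem_union_right _ haS) Finset.subset_union_left
      have : insert a.1 T ⊆ e := (hsub.trans (hAe ▸ Finset.inter_subset_right))
      rw [← hsa]
      exact this
  calc d - (t - 1) = 𝒜'.card := h𝒜'c.symm
    _ ≤ d' := hmax' 𝒜' hshat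

lemma vcHt_count' {V : Type*} [Fintype V] [DecidableEq V] (E : Finset (Finset V))
    (t : ℕ) (d : ℕ) (hmax : ∀ A, Shatters E A → A.card ≤ d)
    (𝒜 : Finset {s : Finset V // s.card = t}) (h𝒜s : Shatters (HtEdges E t) 𝒜) :
    2 ^ 𝒜.card ≤ ∑ k ∈ Finset.Iic d, (𝒜.card * t).choose k := by
  classical
  set U : Finset V := 𝒜.biUnion (fun s => s.1) with hU
  have hsubU : ∀ s ∈ 𝒜, s.1 ⊆ U := fun s hs => Finset.subset_biUnion_of_mem _ hs
  have hUc : U.card ≤ 𝒜.card * t := by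
    calc U.card ≤ ∑ s ∈ 𝒜, s.1.card := Finset.card_biUnion_le
      _ = ∑ s ∈ 𝒜, t := by exact Finset.sum_congr rfl (fun s _ => s.2)
      _ = 𝒜.card * t := by rw [Finset.sum_const, smul_eq_mul]
  set T : Finset (Finset V) := E.image (fun e => U ∩ e) with hT
  have hTlow : 2 ^ 𝒜.card ≤ T.card := by
    set f : Finset V → Finset {s : Finset V // s.card = t} :=
      fun w => 𝒜.filter (fun s => s.1 ⊆ w) with hf
    have hcov : 𝒜.powerset ⊆ T.image f := by
      intro B hB
      rw [Finset.mem_powerset] at hB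
      obtain ⟨fe, hfe, hBe⟩ := h𝒜s B hB
      rw [HtEdges, Finset.mem_image] at hfe
      obtain ⟨e, heE, rfl⟩ := hfe
      rw [Finset.mem_image]
      refine ⟨U ∩ e, Finset.mem_image_of_mem _ heE, ?_⟩
      rw [← hBe, hf]
      ext s
      simp only [Finset.mem_filter, Finset.mem_inter, Finset.mem_univ, true_and,
        Finset.subset_inter_iff]
      exact ⟨fun ⟨h1, _, h3⟩ => ⟨h1, h3⟩, fun ⟨h1, h2⟩ => ⟨h1, hsubU s h1, h2⟩⟩
    calc 2 ^ 𝒜.card = 𝒜.powerset.card := (Finset.card_powerset _).symm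
      _ ≤ (T.image f).card := Finset.card_le_card hcov
      _ ≤ T.card := Finset.card_image_le
  have hTsubU : ∀ w ∈ T, w ⊆ U := by
    intro w hw
    rw [hT, Finset.mem_image] at hw
    obtain ⟨e, _, rfl⟩ := hw
    exact Finset.inter_subset_left
  set T' : Finset (Finset {v : V // v ∈ U}) := T.image (fun w => w.subtype (· ∈ U)) with hT'
  have hrec : ∀ w ∈ T, (w.subtype (· ∈ U)).map (Function.Embedding.subtype _) = w := by
    intro w hw
    rw [Finset.subtype_map, Finset.filter_true_of_mem (fun v hv => hTsubU w hw hv)]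
  have hT'c : T'.card = T.card := by
    rw [hT']
    apply Finset.card_image_of_injOn
    intro w hw w' hw' hww
    rw [← hrec w hw, ← hrec w' hw']
    exact congrArg _ hww
  have hvcT' : T'.vcDim ≤ d := by
    apply Finset.sup_le
    intro A' hA'
    rw [Finset.mem_shatterer] at hA'
    set A : Finset V := A'.map (Function.Embedding.subtype _) with hA
    have hAc : A.card = A'.card := Finset.card_map _
    have hAshat : Shatters E A := by
      intro B hBA
      set B' : Finset {v : V // v ∈ U} := A'.filter (fun v => v.1 ∈ B) with hB'
      have hB'A' : B' ⊆ A' := Finset.filter_subset _ _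
      obtain ⟨u', hu'T', hu'⟩ := hA' hB'A'
      rw [hT', Finset.mem_image] at hu'T'
      obtain ⟨w, hwT, rfl⟩ := hu'T'
      rw [hT, Finset.mem_image] at hwT
      obtain ⟨e, heE, rfl⟩ := hwT
      refine ⟨e, heE, ?_⟩
      ext v
      simp only [Finset.mem_inter, hA, Finset.mem_map, Function.Embedding.coe_subtype]
      constructor
      · rintro ⟨⟨v', hv'A', rfl⟩, hve⟩
        have : v' ∈ A' ∩ (U ∩ e).subtype (· ∈ U) := by
          rw [Finset.mem_inter, Finset.mem_subtype]
          exact ⟨hv'A', Finset.mem_inter.2 ⟨v'.2, hve⟩⟩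
        rw [hu', hB', Finset.mem_filter] at this
        exact this.2
      · intro hvB
        have hvA : v ∈ A := hBA hvB
        rw [hA, Finset.mem_map] at hvA
        obtain ⟨v', hv'A', rfl⟩ := hvA
        have : v' ∈ B' := by rw [hB', Finset.mem_filter]; exact ⟨hv'A', hvB⟩
        rw [← hu', Finset.mem_inter, Finset.mem_subtype, Finset.mem_inter] at this
        exact ⟨⟨v', hv'A', rfl⟩, this.2.2⟩
    calc A'.card = A.card := hAc.symm
      _ ≤ d := hmax A hAshat
  have hcardsub : Fintype.card {v : V // v ∈ U} = U.card := Fintype.card_coe U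
  calc 2 ^ 𝒜.card ≤ T.card := hTlow
    _ = T'.card := hT'c.symm
    _ ≤ T'.shatterer.card := Finset.card_le_card_shatterer T'
    _ ≤ ∑ k ∈ Finset.Iic T'.vcDim, (Fintype.card {v : V // v ∈ U}).choose k :=
        Finset.card_shatterer_le_sum_vcDim
    _ ≤ ∑ k ∈ Finset.Iic d, (Fintype.card {v : V // v ∈ U}).choose k := by
        apply Finset.sum_le_sum_of_subset
        exact Finset.Iic_subset_Iic.2 hvcT'
    _ ≤ ∑ k ∈ Finset.Iic d, (𝒜.card * t).choose k := by
        apply Finset.sum_le_sum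
        intro k _
        exact Nat.choose_le_choose k (hcardsub ▸ hUc)

theorem vcDim_Ht_bounds {V : Type*} [Fintype V] [DecidableEq V] (E : Finset (Finset V))
    (t : ℕ) (ht : 2 ≤ t) (htV : t ≤ Fintype.card V) (d : ℕ) (hvc : IsVCDim E d)
    -- `x = h⁻¹(1/t)`, so that `γ_t = 1/(t*x)`
    (x : ℝ) (hx : x ∈ Set.Ioc (0 : ℝ) (1 / 2)) (hxe : binEntropy x = 1 / (t : ℝ))
    (d' : ℕ) (hvc' : IsVCDim (HtEdges E t) d') :
    (d : ℝ) - (t : ℝ) + 1 ≤ (d' : ℝ) ∧ (d' : ℝ) ≤ (1 / ((t : ℝ) * x)) * (d : ℝ) := by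
  obtain ⟨⟨A0, hA0s, hA0c⟩, hmax⟩ := hvc
  obtain ⟨⟨𝒜, h𝒜s, h𝒜c⟩, hmax'⟩ := hvc'
  obtain ⟨hx0, hx2⟩ := hx
  have ht' : (0:ℝ) < t := by positivity
  constructor
  · -- lower bound
    by_cases hdt : d < t
    · have h1 : (d:ℝ) + 1 ≤ t := by exact_mod_cast hdt
      have h2 : (0:ℝ) ≤ d' := Nat.cast_nonneg _
      linarith
    · push_neg at hdt
      have hnat := vcHt_lower' E t ht d A0 hA0s hA0c hdt d' hmax'
      have hcast : ((d - (t - 1) : ℕ) : ℝ) = (d:ℝ) - t + 1 := by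
        have h1 : t - 1 ≤ d := by omega
        rw [Nat.cast_sub h1, Nat.cast_sub (by omega : 1 ≤ t)]
        push_cast; ring
      calc (d:ℝ) - t + 1 = ((d - (t - 1) : ℕ) : ℝ) := hcast.symm
        _ ≤ (d' : ℝ) := by exact_mod_cast hnat
  · -- upper bound
    have htx : (0:ℝ) < (t:ℝ) * x := by positivity
    rw [one_div, inv_mul_eq_div, le_div_iff₀ htx]
    by_contra hcon
    push_neg at hcon
    have hcount := vcHt_count' E t d hmax 𝒜 h𝒜s
    rw [h𝒜c] at hcount
    have hd'1 : 1 ≤ d' := by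
      by_contra h
      have : d' = 0 := by omega
      rw [this, Nat.cast_zero, zero_mul] at hcon
      exact absurd hcon (Nat.cast_nonneg d).not_gt
    have hd1 : 1 ≤ d := by
      by_contra h
      have hd0 : d = 0 := by omega
      rw [hd0] at hcount
      rw [show Finset.Iic 0 = {0} by ext k; simp, Finset.sum_singleton,
        Nat.choose_zero_right] at hcount
      have : 2 ≤ 2 ^ d' := by
        calc 2 = 2^1 := (pow_one 2).symm
          _ ≤ 2^d' := Nat.pow_le_pow_right (by norm_num) hd'1
      omega
    set n : ℕ := d' * t with hn
    have hn0 : 0 < n := by positivity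
    have hn' : (0:ℝ) < n := by exact_mod_cast hn0
    have hncast : (n:ℝ) = (d':ℝ) * t := by rw [hn]; push_cast; ring
    have hdlt : (d:ℝ) < (n:ℝ) * x := by
      rw [hncast, mul_assoc]; exact hcon
    have hdn : d ≤ n := by
      have : (d:ℝ) < n := by nlinarith
      exact_mod_cast this.le
    have hp2 : (d:ℝ)/n ≤ 1/2 := by
      rw [div_le_iff₀ hn']
      nlinarith
    have hent := sum_choose_le_rpow' n d hd1 hdn hp2
    have hplt : (d:ℝ)/n < x := by
      rw [div_lt_iff₀ hn']
      linarith
    have hbinlt : binEntropy ((d:ℝ)/n) < 1 / (t:ℝ) := by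
      rw [← hxe]
      exact binEntropy_lt_binEntropy' (by positivity) hplt hx2
    have hexp : (n:ℝ) * binEntropy ((d:ℝ)/n) < (d':ℝ) := by
      have : (n:ℝ) * binEntropy ((d:ℝ)/n) < (n:ℝ) * (1 / (t:ℝ)) :=
        (mul_lt_mul_iff_right₀ hn').2 hbinlt
      have heq : (n:ℝ) * (1 / (t:ℝ)) = d' := by
        rw [hn]; push_cast; field_simp
      linarith
    have hcast : ((2 ^ d' : ℕ) : ℝ) ≤ ∑ k ∈ Finset.Iic d, ((n.choose k : ℕ) : ℝ) := by
      push_cast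
      exact_mod_cast hcount
    have hchain : (2:ℝ) ^ ((d':ℕ):ℝ) ≤ (2:ℝ) ^ ((n:ℝ) * binEntropy ((d:ℝ)/n)) := by
      calc (2:ℝ) ^ ((d':ℕ):ℝ) = ((2 ^ d' : ℕ) : ℝ) := by
            rw [Real.rpow_natCast]; push_cast; ring
        _ ≤ ∑ k ∈ Finset.Iic d, ((n.choose k : ℕ) : ℝ) := hcast
        _ ≤ _ := hent
    have hlt : (2:ℝ) ^ ((n:ℝ) * binEntropy ((d:ℝ)/n)) < (2:ℝ) ^ ((d':ℕ):ℝ) :=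
      (Real.rpow_lt_rpow_left_iff (by norm_num)).2 hexp
    linarith
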